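/- For every d ≥ 1, all x, y in the simplex S_d, and every index i ∈ {1,…,d}, one has x_i − Leb( (S_{i−1}^x, S_i^x] ∩ (S_{i−1}^y, S_i^y] ) ≤ ‖x − y‖₁, where Leb denotes Lebesgue measure on ℝ and ‖x − y‖₁ = Σ_{j=1}^d |x_j − y_j|. -/

import Mathlib

open MeasureTheory

/-- Partial sum `S_i^x = x_1 + ⋯ + x_i` of the first `i` coordinates of `x : ℝ^d`. -/
def partSum {d : ℕ} (x : Fin d → ℝ) (i : ℕ) : ℝ :=
  ∑ j ∈ Finset.univ.filter (fun j : Fin d => (j : ℕ) < i), x j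

lemma partSum_succ' {d : ℕ} (x : Fin d → ℝ) (i : Fin d) :
    partSum x ((i : ℕ) + 1) = partSum x (i : ℕ) + x i := by
  unfold partSum
  have h : Finset.univ.filter (fun j : Fin d => (j : ℕ) < (i : ℕ) + 1)
      = insert i (Finset.univ.filter (fun j : Fin d => (j : ℕ) < (i : ℕ))) := by
    ext j
    simp [Nat.lt_succ_iff_lt_or_eq, Fin.ext_iff, or_comm, le_iff_eq_or_lt]
  rw [h, Finset.sum_insert (by simp)]
  ring

/-- For `x, y` in the simplex `S_d` and each coordinate `i`,
`x_i − Leb((S_{i−1}^x, S_i^x] ∩ (S_{i−1}^y, S_i^y]) ≤ ‖x − y‖₁`. -/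
theorem coord_sub_overlap_le_l1
    (d : ℕ) (hd : 1 ≤ d) (x y : Fin d → ℝ)
    (hx : x ∈ stdSimplex ℝ (Fin d)) (hy : y ∈ stdSimplex ℝ (Fin d)) (i : Fin d) :
    x i - (MeasureTheory.volume
        (Set.Ioc (partSum x (i : ℕ)) (partSum x ((i : ℕ) + 1))
          ∩ Set.Ioc (partSum y (i : ℕ)) (partSum y ((i : ℕ) + 1)))).toReal
      ≤ ∑ j, |x j - y j| := by
  set a := partSum x (i : ℕ) with ha
  set b := partSum x ((i : ℕ) + 1) with hb
  set c := partSum y (i : ℕ) with hc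
  set e := partSum y ((i : ℕ) + 1) with he
  have hxb : b = a + x i := partSum_succ' x i
  set A := Finset.univ.filter (fun j : Fin d => (j : ℕ) < (i : ℕ)) with hA
  set B := Finset.univ.filter (fun j : Fin d => ¬ ((j : ℕ) < (i : ℕ) + 1)) with hB
  -- |a - c| ≤ ∑ over A
  have h1 : |a - c| ≤ ∑ j ∈ A, |x j - y j| := by
    rw [ha, hc]
    unfold partSum
    rw [← Finset.sum_sub_distrib]
    exact Finset.abs_sum_le_sum_abs _ _
  -- b - e = ∑ over B of (y j - x j)
  have hsx : b + ∑ j ∈ B, x j = 1 := by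
    rw [hb]
    unfold partSum
    rw [Finset.sum_filter_add_sum_filter_not]
    exact hx.2
  have hsy : e + ∑ j ∈ B, y j = 1 := by
    rw [he]
    unfold partSum
    rw [Finset.sum_filter_add_sum_filter_not]
    exact hy.2
  have h2 : |b - e| ≤ ∑ j ∈ B, |x j - y j| := by
    have hbe : b - e = ∑ j ∈ B, (y j - x j) := by
      rw [Finset.sum_sub_distrib]; linarith
    rw [hbe]
    calc |∑ j ∈ B, (y j - x j)| ≤ ∑ j ∈ B, |y j - x j| := Finset.abs_sum_le_sum_abs _ _
      _ = ∑ j ∈ B, |x j - y j| := by simp [abs_sub_comm]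
  have hdisj : Disjoint A B := by
    rw [Finset.disjoint_filter]
    intro j _ hj
    omega
  have h3 : (∑ j ∈ A, |x j - y j|) + ∑ j ∈ B, |x j - y j| ≤ ∑ j, |x j - y j| := by
    rw [← Finset.sum_union hdisj]
    exact Finset.sum_le_sum_of_subset_of_nonneg (Finset.subset_univ _)
      (fun j _ _ => abs_nonneg _)
  -- measure computation
  rw [Set.Ioc_inter_Ioc, Real.volume_Ioc]
  have hv : min b e - max a c ≤ (ENNReal.ofReal (min b e - max a c)).toReal := by
    rcases le_total 0 (min b e - max a c) with h | h
    · rw [ENNReal.toReal_ofReal h]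
    · exact h.trans ENNReal.toReal_nonneg
  have h4 : b - min b e ≤ |b - e| := by
    rcases le_total b e with h | h
    · simp [min_eq_left h, abs_nonneg]
    · rw [min_eq_right h]; exact le_abs_self _
  have h5 : max a c - a ≤ |a - c| := by
    rcases le_total a c with h | h
    · rw [max_eq_right h, abs_sub_comm]; exact le_abs_self _
    · simp [max_eq_left h, abs_nonneg]
  have : x i = b - a := by linarith
  linarith
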